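/- There exists a constant L > 0, depending only on B, R and C (and in particular independent of γ, f and r), such that for every γ > 0 and all z, Z, z', Z' ∈ ℝ^d with |z| ≤ C and |Z| ≤ C: |G(z', Z') − G(z, Z)| ≤ L(1 + e^{L/γ} + γ^{-1} e^{L/γ}) |z' − z| + L |Z' − Z|. -/

import Mathlib

open MeasureTheory
open scoped RealInnerProductSpace


/-- The Gibbs probability density `π_z(a) ∝ exp((f(a)·z + r(a))/γ)` on the set `𝒜`. -/
noncomputable def gibbs {m d : ℕ} (𝒜 : Set (EuclideanSpace ℝ (Fin m))) (γ : ℝ)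
    (f : EuclideanSpace ℝ (Fin m) → EuclideanSpace ℝ (Fin d))
    (r : EuclideanSpace ℝ (Fin m) → ℝ)
    (z : EuclideanSpace ℝ (Fin d)) (a : EuclideanSpace ℝ (Fin m)) : ℝ :=
  Real.exp ((⟪f a, z⟫ + r a) / γ) /
    ∫ a' in 𝒜, Real.exp ((⟪f a', z⟫ + r a') / γ)

/-- `G(z,Z) = ∫_𝒜 (f(a)·Z + r(a) − γ log π_z(a)) π_z(a) da`. -/
noncomputable def gibbsG {m d : ℕ} (𝒜 : Set (EuclideanSpace ℝ (Fin m))) (γ : ℝ)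
    (f : EuclideanSpace ℝ (Fin m) → EuclideanSpace ℝ (Fin d))
    (r : EuclideanSpace ℝ (Fin m) → ℝ)
    (z Z : EuclideanSpace ℝ (Fin d)) : ℝ :=
  ∫ a in 𝒜, (⟪f a, Z⟫ + r a - γ * Real.log (gibbs 𝒜 γ f r z a)) * gibbs 𝒜 γ f r z a

lemma aux_abs_exp_sub_one (t : ℝ) : |Real.exp t - 1| ≤ |t| * Real.exp |t| := by
  have key : Real.exp (-t) * Real.exp t = 1 := by rw [← Real.exp_add]; simp
  rcases le_or_gt 0 t with h | h
  · rw [abs_of_nonneg h, abs_of_nonneg (by simpa using Real.one_le_exp h)]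
    nlinarith [mul_le_mul_of_nonneg_right (Real.add_one_le_exp (-t)) (Real.exp_pos t).le]
  · rw [abs_of_neg h, abs_of_nonpos (by simpa using Real.exp_le_one_iff.mpr h.le)]
    have h1 : t + 1 ≤ Real.exp t := Real.add_one_le_exp t
    have h2 : (1:ℝ) ≤ Real.exp (-t) := Real.one_le_exp (by linarith)
    nlinarith

lemma aux_intOn {m : ℕ} {𝒜 : Set (EuclideanSpace ℝ (Fin m))} (hvol : volume 𝒜 ≠ ⊤)
    {g : EuclideanSpace ℝ (Fin m) → ℝ} (hg : Measurable g) {c : ℝ}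
    (hb : ∀ a ∈ 𝒜, |g a| ≤ c) (h𝒜 : MeasurableSet 𝒜) : IntegrableOn g 𝒜 volume := by
  refine Measure.integrableOn_of_bounded hvol hg.aestronglyMeasurable (M := c) ?_
  exact (ae_restrict_iff' h𝒜).mpr (ae_of_all _ fun a ha => by simpa using hb a ha)

lemma aux_abs_int {α : Type*} [MeasurableSpace α] (μ : MeasureTheory.Measure α) (g : α → ℝ) :
    |∫ a, g a ∂μ| ≤ ∫ a, |g a| ∂μ := by
  simpa [Real.norm_eq_abs] using norm_integral_le_integral_norm (μ := μ) g

section helpers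

variable {m d : ℕ} {𝒜 : Set (EuclideanSpace ℝ (Fin m))} {γ : ℝ}
  {f : EuclideanSpace ℝ (Fin m) → EuclideanSpace ℝ (Fin d)}
  {r : EuclideanSpace ℝ (Fin m) → ℝ} {B R : ℝ}

/-- The normalizing constant of the Gibbs density. -/
noncomputable def Epart (𝒜 : Set (EuclideanSpace ℝ (Fin m))) (γ : ℝ)
    (f : EuclideanSpace ℝ (Fin m) → EuclideanSpace ℝ (Fin d))
    (r : EuclideanSpace ℝ (Fin m) → ℝ) (w : EuclideanSpace ℝ (Fin d)) : ℝ :=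
  ∫ a in 𝒜, Real.exp ((⟪f a, w⟫ + r a) / γ)

lemma gibbs_eq (w : EuclideanSpace ℝ (Fin d)) (a : EuclideanSpace ℝ (Fin m)) :
    gibbs 𝒜 γ f r w a = Real.exp ((⟪f a, w⟫ + r a) / γ) / Epart 𝒜 γ f r w := rfl

lemma meas_expArg (hfm : Measurable f) (hrm : Measurable r) (w : EuclideanSpace ℝ (Fin d)) :
    Measurable fun a => Real.exp ((⟪f a, w⟫ + r a) / γ) :=
  (((hfm.inner_const).add hrm).div_const γ).exp

lemma expArg_abs_le (hγ : 0 < γ) (hfB : ∀ a ∈ 𝒜, ‖f a‖ ≤ B) (hrR : ∀ a ∈ 𝒜, |r a| ≤ R)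
    (w : EuclideanSpace ℝ (Fin d)) {a : EuclideanSpace ℝ (Fin m)} (ha : a ∈ 𝒜) :
    |(⟪f a, w⟫ + r a) / γ| ≤ (B * ‖w‖ + R) / γ := by
  rw [abs_div, abs_of_pos hγ]
  gcongr
  have h1 : |⟪f a, w⟫| ≤ B * ‖w‖ :=
    (abs_real_inner_le_norm _ _).trans (mul_le_mul_of_nonneg_right (hfB a ha) (norm_nonneg _))
  calc |⟪f a, w⟫ + r a| ≤ |⟪f a, w⟫| + |r a| := abs_add_le _ _
    _ ≤ B * ‖w‖ + R := add_le_add h1 (hrR a ha)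

lemma int_expArg (h𝒜 : MeasurableSet 𝒜) (hvolne : volume 𝒜 ≠ ⊤) (hγ : 0 < γ)
    (hfm : Measurable f) (hrm : Measurable r)
    (hfB : ∀ a ∈ 𝒜, ‖f a‖ ≤ B) (hrR : ∀ a ∈ 𝒜, |r a| ≤ R) (w : EuclideanSpace ℝ (Fin d)) :
    IntegrableOn (fun a => Real.exp ((⟪f a, w⟫ + r a) / γ)) 𝒜 volume := by
  refine aux_intOn hvolne (meas_expArg hfm hrm w) (c := Real.exp ((B * ‖w‖ + R) / γ)) ?_ h𝒜
  intro a ha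
  rw [abs_of_pos (Real.exp_pos _)]
  exact Real.exp_le_exp.mpr ((abs_le.mp (expArg_abs_le hγ hfB hrR w ha)).2)

lemma Epart_pos (h𝒜 : MeasurableSet 𝒜) (hvol0 : 0 < volume 𝒜) (hvolne : volume 𝒜 ≠ ⊤)
    (hγ : 0 < γ) (hfm : Measurable f) (hrm : Measurable r)
    (hfB : ∀ a ∈ 𝒜, ‖f a‖ ≤ B) (hrR : ∀ a ∈ 𝒜, |r a| ≤ R) (w : EuclideanSpace ℝ (Fin d)) :
    0 < Epart 𝒜 γ f r w := by
  have hvt : 0 < (volume 𝒜).toReal := ENNReal.toReal_pos hvol0.ne' hvolne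
  have hle : Real.exp (-((B * ‖w‖ + R) / γ)) * (volume 𝒜).toReal ≤ Epart 𝒜 γ f r w := by
    refine setIntegral_ge_of_const_le_real h𝒜 hvolne (fun a ha => ?_)
      (int_expArg h𝒜 hvolne hγ hfm hrm hfB hrR w)
    exact Real.exp_le_exp.mpr ((abs_le.mp (expArg_abs_le hγ hfB hrR w ha)).1)
  exact lt_of_lt_of_le (by positivity) hle

lemma Epart_comp (h𝒜 : MeasurableSet 𝒜) (hvolne : volume 𝒜 ≠ ⊤) (hγ : 0 < γ)
    (hfm : Measurable f) (hrm : Measurable r)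
    (hfB : ∀ a ∈ 𝒜, ‖f a‖ ≤ B) (hrR : ∀ a ∈ 𝒜, |r a| ≤ R) (hB : 0 ≤ B)
    (w₁ w₂ : EuclideanSpace ℝ (Fin d)) :
    Epart 𝒜 γ f r w₁ ≤ Epart 𝒜 γ f r w₂ * Real.exp (B * ‖w₁ - w₂‖ / γ) := by
  have hptw : ∀ a ∈ 𝒜, Real.exp ((⟪f a, w₁⟫ + r a) / γ) ≤
      Real.exp ((⟪f a, w₂⟫ + r a) / γ) * Real.exp (B * ‖w₁ - w₂‖ / γ) := by
    intro a ha
    rw [← Real.exp_add, ← add_div]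
    apply Real.exp_le_exp.mpr
    have h2 : ⟪f a, w₁ - w₂⟫ ≤ B * ‖w₁ - w₂‖ :=
      (real_inner_le_norm _ _).trans (mul_le_mul_of_nonneg_right (hfB a ha) (norm_nonneg _))
    rw [inner_sub_right] at h2
    exact (div_le_div_iff_of_pos_right hγ).mpr (by linarith)
  calc Epart 𝒜 γ f r w₁
      ≤ ∫ a in 𝒜, Real.exp ((⟪f a, w₂⟫ + r a) / γ) * Real.exp (B * ‖w₁ - w₂‖ / γ) :=
        setIntegral_mono_on (int_expArg h𝒜 hvolne hγ hfm hrm hfB hrR w₁)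
          ((int_expArg h𝒜 hvolne hγ hfm hrm hfB hrR w₂).mul_const _) h𝒜 hptw
    _ = Epart 𝒜 γ f r w₂ * Real.exp (B * ‖w₁ - w₂‖ / γ) := integral_mul_const _ _

end helpers

section helpers2

variable {m d : ℕ} {𝒜 : Set (EuclideanSpace ℝ (Fin m))} {γ : ℝ}
  {f : EuclideanSpace ℝ (Fin m) → EuclideanSpace ℝ (Fin d)}
  {r : EuclideanSpace ℝ (Fin m) → ℝ} {B R : ℝ}

lemma meas_gibbs (hfm : Measurable f) (hrm : Measurable r) (w : EuclideanSpace ℝ (Fin d)) :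
    Measurable (gibbs 𝒜 γ f r w) :=
  (meas_expArg hfm hrm w).div_const _

lemma gibbs_nonneg (h𝒜 : MeasurableSet 𝒜) (hvol0 : 0 < volume 𝒜) (hvolne : volume 𝒜 ≠ ⊤)
    (hγ : 0 < γ) (hfm : Measurable f) (hrm : Measurable r)
    (hfB : ∀ a ∈ 𝒜, ‖f a‖ ≤ B) (hrR : ∀ a ∈ 𝒜, |r a| ≤ R) (w : EuclideanSpace ℝ (Fin d))
    (a : EuclideanSpace ℝ (Fin m)) : 0 ≤ gibbs 𝒜 γ f r w a :=
  div_nonneg (Real.exp_pos _).le (Epart_pos h𝒜 hvol0 hvolne hγ hfm hrm hfB hrR w).le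

lemma gibbs_le (h𝒜 : MeasurableSet 𝒜) (hvol0 : 0 < volume 𝒜) (hvolne : volume 𝒜 ≠ ⊤)
    (hγ : 0 < γ) (hfm : Measurable f) (hrm : Measurable r)
    (hfB : ∀ a ∈ 𝒜, ‖f a‖ ≤ B) (hrR : ∀ a ∈ 𝒜, |r a| ≤ R) (w : EuclideanSpace ℝ (Fin d))
    {a : EuclideanSpace ℝ (Fin m)} (ha : a ∈ 𝒜) :
    gibbs 𝒜 γ f r w a ≤ Real.exp ((B * ‖w‖ + R) / γ) / Epart 𝒜 γ f r w := by
  rw [gibbs_eq]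
  have hE := Epart_pos h𝒜 hvol0 hvolne hγ hfm hrm hfB hrR w
  exact (div_le_div_iff_of_pos_right hE).mpr <| Real.exp_le_exp.mpr ((abs_le.mp (expArg_abs_le hγ hfB hrR w ha)).2)

lemma int_gibbs (h𝒜 : MeasurableSet 𝒜) (hvol0 : 0 < volume 𝒜) (hvolne : volume 𝒜 ≠ ⊤)
    (hγ : 0 < γ) (hfm : Measurable f) (hrm : Measurable r)
    (hfB : ∀ a ∈ 𝒜, ‖f a‖ ≤ B) (hrR : ∀ a ∈ 𝒜, |r a| ≤ R) (w : EuclideanSpace ℝ (Fin d)) :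
    IntegrableOn (gibbs 𝒜 γ f r w) 𝒜 volume := by
  refine aux_intOn hvolne (meas_gibbs hfm hrm w)
    (c := Real.exp ((B * ‖w‖ + R) / γ) / Epart 𝒜 γ f r w) (fun a ha => ?_) h𝒜
  rw [abs_of_nonneg (gibbs_nonneg h𝒜 hvol0 hvolne hγ hfm hrm hfB hrR w a)]
  exact gibbs_le h𝒜 hvol0 hvolne hγ hfm hrm hfB hrR w ha

lemma int_inner_gibbs (h𝒜 : MeasurableSet 𝒜) (hvol0 : 0 < volume 𝒜) (hvolne : volume 𝒜 ≠ ⊤)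
    (hγ : 0 < γ) (hfm : Measurable f) (hrm : Measurable r) (hB : 0 ≤ B)
    (hfB : ∀ a ∈ 𝒜, ‖f a‖ ≤ B) (hrR : ∀ a ∈ 𝒜, |r a| ≤ R)
    (w c : EuclideanSpace ℝ (Fin d)) :
    IntegrableOn (fun a => ⟪f a, c⟫ * gibbs 𝒜 γ f r w a) 𝒜 volume := by
  refine aux_intOn hvolne ((hfm.inner_const).mul (meas_gibbs hfm hrm w))
    (c := B * ‖c‖ * (Real.exp ((B * ‖w‖ + R) / γ) / Epart 𝒜 γ f r w)) (fun a ha => ?_) h𝒜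
  rw [abs_mul, abs_of_nonneg (gibbs_nonneg h𝒜 hvol0 hvolne hγ hfm hrm hfB hrR w a)]
  have h1 : |⟪f a, c⟫| ≤ B * ‖c‖ :=
    (abs_real_inner_le_norm _ _).trans (mul_le_mul_of_nonneg_right (hfB a ha) (norm_nonneg _))
  exact mul_le_mul h1 (gibbs_le h𝒜 hvol0 hvolne hγ hfm hrm hfB hrR w ha)
    (gibbs_nonneg h𝒜 hvol0 hvolne hγ hfm hrm hfB hrR w a) (by positivity)

lemma int_gibbs_one (h𝒜 : MeasurableSet 𝒜) (hvol0 : 0 < volume 𝒜) (hvolne : volume 𝒜 ≠ ⊤)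
    (hγ : 0 < γ) (hfm : Measurable f) (hrm : Measurable r)
    (hfB : ∀ a ∈ 𝒜, ‖f a‖ ≤ B) (hrR : ∀ a ∈ 𝒜, |r a| ≤ R) (w : EuclideanSpace ℝ (Fin d)) :
    ∫ a in 𝒜, gibbs 𝒜 γ f r w a = 1 := by
  simp only [gibbs_eq]
  rw [integral_div]
  exact div_self (Epart_pos h𝒜 hvol0 hvolne hγ hfm hrm hfB hrR w).ne'

lemma gibbsG_eq (h𝒜 : MeasurableSet 𝒜) (hvol0 : 0 < volume 𝒜) (hvolne : volume 𝒜 ≠ ⊤)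
    (hγ : 0 < γ) (hfm : Measurable f) (hrm : Measurable r) (hB : 0 ≤ B)
    (hfB : ∀ a ∈ 𝒜, ‖f a‖ ≤ B) (hrR : ∀ a ∈ 𝒜, |r a| ≤ R)
    (w W : EuclideanSpace ℝ (Fin d)) :
    gibbsG 𝒜 γ f r w W = (∫ a in 𝒜, ⟪f a, W - w⟫ * gibbs 𝒜 γ f r w a)
      + γ * Real.log (Epart 𝒜 γ f r w) := by
  have hE := Epart_pos h𝒜 hvol0 hvolne hγ hfm hrm hfB hrR w
  have h1 : Set.EqOn
      (fun a => (⟪f a, W⟫ + r a - γ * Real.log (gibbs 𝒜 γ f r w a)) * gibbs 𝒜 γ f r w a)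
      (fun a => ⟪f a, W - w⟫ * gibbs 𝒜 γ f r w a
        + (γ * Real.log (Epart 𝒜 γ f r w)) * gibbs 𝒜 γ f r w a) 𝒜 := by
    intro a ha
    simp only
    have hlog : Real.log (gibbs 𝒜 γ f r w a)
        = (⟪f a, w⟫ + r a) / γ - Real.log (Epart 𝒜 γ f r w) := by
      rw [gibbs_eq, Real.log_div (Real.exp_ne_zero _) hE.ne', Real.log_exp]
    rw [hlog, inner_sub_right]
    field_simp
    ring
  rw [gibbsG, setIntegral_congr_fun h𝒜 h1,
    integral_add (int_inner_gibbs h𝒜 hvol0 hvolne hγ hfm hrm hB hfB hrR w (W - w))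
      ((int_gibbs h𝒜 hvol0 hvolne hγ hfm hrm hfB hrR w).const_mul _),
    integral_const_mul, int_gibbs_one h𝒜 hvol0 hvolne hγ hfm hrm hfB hrR w, mul_one]

end helpers2
set_option maxHeartbeats 1000000 in
/-- Lipschitz property of `G`: the Lipschitz constant `L` depends only on
`B`, `R` and `C`, and in particular not on `γ`, `f` or `r`. -/
theorem stmt2 (B R C : ℝ) (hB : 0 < B) (hR : 0 < R) (hC : 0 < C) :
    ∃ L > 0, ∀ (m d : ℕ) (𝒜 : Set (EuclideanSpace ℝ (Fin m))),
      IsCompact 𝒜 → 0 < volume 𝒜 → volume 𝒜 < ⊤ →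
      ∀ γ : ℝ, 0 < γ →
      ∀ (f : EuclideanSpace ℝ (Fin m) → EuclideanSpace ℝ (Fin d))
        (r : EuclideanSpace ℝ (Fin m) → ℝ),
        Measurable f → Measurable r →
        (∀ a ∈ 𝒜, ‖f a‖ ≤ B) → (∀ a ∈ 𝒜, |r a| ≤ R) →
      ∀ z Z z' Z' : EuclideanSpace ℝ (Fin d), ‖z‖ ≤ C → ‖Z‖ ≤ C →
        |gibbsG 𝒜 γ f r z' Z' - gibbsG 𝒜 γ f r z Z| ≤
          L * (1 + Real.exp (L / γ) + γ⁻¹ * Real.exp (L / γ)) * ‖z' - z‖ +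
            L * ‖Z' - Z‖ := by
  refine ⟨4*B + 4*B*C + 4*B^2*C, by positivity, ?_⟩
  intro m d 𝒜 hcomp hvol0 hvolT γ hγ f r hfm hrm hfB hrR z Z z' Z' hz hZ
  have h𝒜 : MeasurableSet 𝒜 := hcomp.isClosed.measurableSet
  have hvolne : volume 𝒜 ≠ ⊤ := hvolT.ne
  have hδ0 : (0:ℝ) ≤ ‖z' - z‖ := norm_nonneg _
  have hε0 : (0:ℝ) ≤ ‖Z' - Z‖ := norm_nonneg _
  have hEpos : 0 < Epart 𝒜 γ f r z := Epart_pos h𝒜 hvol0 hvolne hγ hfm hrm hfB hrR z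
  have hE'pos : 0 < Epart 𝒜 γ f r z' := Epart_pos h𝒜 hvol0 hvolne hγ hfm hrm hfB hrR z'
  have hintE := int_expArg h𝒜 hvolne hγ hfm hrm hfB hrR z
  have hintE' := int_expArg h𝒜 hvolne hγ hfm hrm hfB hrR z'
  have hintπ := int_gibbs h𝒜 hvol0 hvolne hγ hfm hrm hfB hrR z
  have hintπ' := int_gibbs h𝒜 hvol0 hvolne hγ hfm hrm hfB hrR z'
  set K := (B * ‖z' - z‖ / γ) * Real.exp (B * ‖z' - z‖ / γ) with hKdef
  have hK0 : (0:ℝ) ≤ K := by positivity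
  -- pointwise bound on the difference of numerators
  have hptw1 : ∀ a ∈ 𝒜, |Real.exp ((⟪f a, z'⟫ + r a) / γ) - Real.exp ((⟪f a, z⟫ + r a) / γ)|
      ≤ K * Real.exp ((⟪f a, z⟫ + r a) / γ) := by
    intro a ha
    have ht : |⟪f a, z' - z⟫ / γ| ≤ B * ‖z' - z‖ / γ := by
      rw [abs_div, abs_of_pos hγ]
      refine (div_le_div_iff_of_pos_right hγ).mpr ?_
      exact (abs_real_inner_le_norm _ _).trans
        (mul_le_mul_of_nonneg_right (hfB a ha) (norm_nonneg _))
    have he' : Real.exp ((⟪f a, z'⟫ + r a) / γ)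
        = Real.exp ((⟪f a, z⟫ + r a) / γ) * Real.exp (⟪f a, z' - z⟫ / γ) := by
      rw [← Real.exp_add]; congr 1; rw [inner_sub_right]; ring
    rw [he']
    have hfac : Real.exp ((⟪f a, z⟫ + r a) / γ) * Real.exp (⟪f a, z' - z⟫ / γ)
        - Real.exp ((⟪f a, z⟫ + r a) / γ)
        = Real.exp ((⟪f a, z⟫ + r a) / γ) * (Real.exp (⟪f a, z' - z⟫ / γ) - 1) := by ring
    rw [hfac, abs_mul, abs_of_pos (Real.exp_pos _), mul_comm K _]
    refine mul_le_mul_of_nonneg_left ?_ (Real.exp_pos _).le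
    calc |Real.exp (⟪f a, z' - z⟫ / γ) - 1|
        ≤ |⟪f a, z' - z⟫ / γ| * Real.exp |⟪f a, z' - z⟫ / γ| := aux_abs_exp_sub_one _
      _ ≤ (B * ‖z' - z‖ / γ) * Real.exp (B * ‖z' - z‖ / γ) :=
          mul_le_mul ht (Real.exp_le_exp.mpr ht) (Real.exp_pos _).le (by positivity)
  -- bound on the difference of normalizing constants
  have hEd : |Epart 𝒜 γ f r z' - Epart 𝒜 γ f r z| ≤ K * Epart 𝒜 γ f r z := by
    have h1 : Epart 𝒜 γ f r z' - Epart 𝒜 γ f r z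
        = ∫ a in 𝒜, (Real.exp ((⟪f a, z'⟫ + r a) / γ) - Real.exp ((⟪f a, z⟫ + r a) / γ)) :=
      (integral_sub hintE' hintE).symm
    rw [h1]
    calc |∫ a in 𝒜, (Real.exp ((⟪f a, z'⟫ + r a) / γ) - Real.exp ((⟪f a, z⟫ + r a) / γ))|
        ≤ ∫ a in 𝒜, |Real.exp ((⟪f a, z'⟫ + r a) / γ) - Real.exp ((⟪f a, z⟫ + r a) / γ)| :=
          aux_abs_int _ _
      _ ≤ ∫ a in 𝒜, K * Real.exp ((⟪f a, z⟫ + r a) / γ) :=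
          setIntegral_mono_on (hintE'.sub hintE).abs (hintE.const_mul K) h𝒜 hptw1
      _ = K * Epart 𝒜 γ f r z := integral_const_mul _ _
  -- pointwise bound on the density difference
  have hπptw : ∀ a ∈ 𝒜, |gibbs 𝒜 γ f r z' a - gibbs 𝒜 γ f r z a|
      ≤ (2*K) * (Real.exp ((⟪f a, z⟫ + r a) / γ) / Epart 𝒜 γ f r z') := by
    intro a ha
    have hsplit : gibbs 𝒜 γ f r z' a - gibbs 𝒜 γ f r z a
        = (Real.exp ((⟪f a, z'⟫ + r a) / γ) - Real.exp ((⟪f a, z⟫ + r a) / γ)) / Epart 𝒜 γ f r z'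
          + Real.exp ((⟪f a, z⟫ + r a) / γ) * (Epart 𝒜 γ f r z - Epart 𝒜 γ f r z')
            / (Epart 𝒜 γ f r z * Epart 𝒜 γ f r z') := by
      rw [gibbs_eq, gibbs_eq]
      field_simp
      ring
    rw [hsplit]
    have hX : |(Real.exp ((⟪f a, z'⟫ + r a) / γ) - Real.exp ((⟪f a, z⟫ + r a) / γ))
        / Epart 𝒜 γ f r z'| ≤ K * Real.exp ((⟪f a, z⟫ + r a) / γ) / Epart 𝒜 γ f r z' := by
      rw [abs_div, abs_of_pos hE'pos]
      exact (div_le_div_iff_of_pos_right hE'pos).mpr (hptw1 a ha)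
    have hY : |Real.exp ((⟪f a, z⟫ + r a) / γ) * (Epart 𝒜 γ f r z - Epart 𝒜 γ f r z')
        / (Epart 𝒜 γ f r z * Epart 𝒜 γ f r z')|
        ≤ K * Real.exp ((⟪f a, z⟫ + r a) / γ) / Epart 𝒜 γ f r z' := by
      rw [abs_div, abs_mul, abs_of_pos (Real.exp_pos _), abs_of_pos (mul_pos hEpos hE'pos)]
      have h2 : Real.exp ((⟪f a, z⟫ + r a) / γ) * |Epart 𝒜 γ f r z - Epart 𝒜 γ f r z'|
          ≤ Real.exp ((⟪f a, z⟫ + r a) / γ) * (K * Epart 𝒜 γ f r z) :=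
        mul_le_mul_of_nonneg_left (by rw [abs_sub_comm]; exact hEd) (Real.exp_pos _).le
      calc Real.exp ((⟪f a, z⟫ + r a) / γ) * |Epart 𝒜 γ f r z - Epart 𝒜 γ f r z'|
            / (Epart 𝒜 γ f r z * Epart 𝒜 γ f r z')
          ≤ Real.exp ((⟪f a, z⟫ + r a) / γ) * (K * Epart 𝒜 γ f r z)
            / (Epart 𝒜 γ f r z * Epart 𝒜 γ f r z') :=
            (div_le_div_iff_of_pos_right (mul_pos hEpos hE'pos)).mpr h2
        _ = K * Real.exp ((⟪f a, z⟫ + r a) / γ) / Epart 𝒜 γ f r z' := by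
            field_simp
    calc |(Real.exp ((⟪f a, z'⟫ + r a) / γ) - Real.exp ((⟪f a, z⟫ + r a) / γ)) / Epart 𝒜 γ f r z'
          + Real.exp ((⟪f a, z⟫ + r a) / γ) * (Epart 𝒜 γ f r z - Epart 𝒜 γ f r z')
            / (Epart 𝒜 γ f r z * Epart 𝒜 γ f r z')|
        ≤ |(Real.exp ((⟪f a, z'⟫ + r a) / γ) - Real.exp ((⟪f a, z⟫ + r a) / γ)) / Epart 𝒜 γ f r z'|
          + |Real.exp ((⟪f a, z⟫ + r a) / γ) * (Epart 𝒜 γ f r z - Epart 𝒜 γ f r z')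
            / (Epart 𝒜 γ f r z * Epart 𝒜 γ f r z')| := abs_add_le _ _
      _ ≤ K * Real.exp ((⟪f a, z⟫ + r a) / γ) / Epart 𝒜 γ f r z'
          + K * Real.exp ((⟪f a, z⟫ + r a) / γ) / Epart 𝒜 γ f r z' := add_le_add hX hY
      _ = (2*K) * (Real.exp ((⟪f a, z⟫ + r a) / γ) / Epart 𝒜 γ f r z') := by ring
  -- total-variation-type bounds
  have hintabs : IntegrableOn (fun a => |gibbs 𝒜 γ f r z' a - gibbs 𝒜 γ f r z a|) 𝒜 volume :=
    (hintπ'.sub hintπ).abs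
  have hT0 : (0:ℝ) ≤ ∫ a in 𝒜, |gibbs 𝒜 γ f r z' a - gibbs 𝒜 γ f r z a| :=
    integral_nonneg fun a => abs_nonneg _
  have hT2 : (∫ a in 𝒜, |gibbs 𝒜 γ f r z' a - gibbs 𝒜 γ f r z a|) ≤ 2 := by
    calc (∫ a in 𝒜, |gibbs 𝒜 γ f r z' a - gibbs 𝒜 γ f r z a|)
        ≤ ∫ a in 𝒜, (gibbs 𝒜 γ f r z' a + gibbs 𝒜 γ f r z a) := by
          refine setIntegral_mono_on hintabs (hintπ'.add hintπ) h𝒜 (fun a ha => ?_)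
          calc |gibbs 𝒜 γ f r z' a - gibbs 𝒜 γ f r z a|
              ≤ |gibbs 𝒜 γ f r z' a| + |gibbs 𝒜 γ f r z a| := abs_sub _ _
            _ = gibbs 𝒜 γ f r z' a + gibbs 𝒜 γ f r z a := by
                rw [abs_of_nonneg (gibbs_nonneg h𝒜 hvol0 hvolne hγ hfm hrm hfB hrR z' a),
                  abs_of_nonneg (gibbs_nonneg h𝒜 hvol0 hvolne hγ hfm hrm hfB hrR z a)]
      _ = 1 + 1 := by
          rw [integral_add hintπ' hintπ, int_gibbs_one h𝒜 hvol0 hvolne hγ hfm hrm hfB hrR z',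
            int_gibbs_one h𝒜 hvol0 hvolne hγ hfm hrm hfB hrR z]
      _ = 2 := by norm_num
  have hTK : (∫ a in 𝒜, |gibbs 𝒜 γ f r z' a - gibbs 𝒜 γ f r z a|)
      ≤ 2 * K * Real.exp (B * ‖z' - z‖ / γ) := by
    have hEE' : Epart 𝒜 γ f r z ≤ Epart 𝒜 γ f r z' * Real.exp (B * ‖z' - z‖ / γ) := by
      have := Epart_comp h𝒜 hvolne hγ hfm hrm hfB hrR hB.le z z'
      rwa [norm_sub_rev] at this
    calc (∫ a in 𝒜, |gibbs 𝒜 γ f r z' a - gibbs 𝒜 γ f r z a|)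
        ≤ ∫ a in 𝒜, (2*K) * (Real.exp ((⟪f a, z⟫ + r a) / γ) / Epart 𝒜 γ f r z') :=
          setIntegral_mono_on hintabs ((hintE.div_const _).const_mul _) h𝒜 hπptw
      _ = 2 * K * (Epart 𝒜 γ f r z / Epart 𝒜 γ f r z') := by
          rw [integral_const_mul, integral_div]; rfl
      _ ≤ 2 * K * Real.exp (B * ‖z' - z‖ / γ) := by
          refine mul_le_mul_of_nonneg_left ?_ (by positivity)
          rw [div_le_iff₀ hE'pos]
          linarith
  -- Lipschitz bound on γ log Epart
  have hlogE : ∀ w₁ w₂ : EuclideanSpace ℝ (Fin d),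
      γ * Real.log (Epart 𝒜 γ f r w₁) - γ * Real.log (Epart 𝒜 γ f r w₂) ≤ B * ‖w₁ - w₂‖ := by
    intro w₁ w₂
    have h1 : Real.log (Epart 𝒜 γ f r w₁)
        ≤ Real.log (Epart 𝒜 γ f r w₂) + B * ‖w₁ - w₂‖ / γ := by
      calc Real.log (Epart 𝒜 γ f r w₁)
          ≤ Real.log (Epart 𝒜 γ f r w₂ * Real.exp (B * ‖w₁ - w₂‖ / γ)) :=
            Real.log_le_log (Epart_pos h𝒜 hvol0 hvolne hγ hfm hrm hfB hrR w₁)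
              (Epart_comp h𝒜 hvolne hγ hfm hrm hfB hrR hB.le w₁ w₂)
        _ = _ := by
            rw [Real.log_mul (Epart_pos h𝒜 hvol0 hvolne hγ hfm hrm hfB hrR w₂).ne'
              (Real.exp_ne_zero _), Real.log_exp]
    have h2 : γ * (B * ‖w₁ - w₂‖ / γ) = B * ‖w₁ - w₂‖ := by field_simp
    nlinarith [mul_le_mul_of_nonneg_left h1 hγ.le]
  have hCd : |γ * Real.log (Epart 𝒜 γ f r z') - γ * Real.log (Epart 𝒜 γ f r z)|
      ≤ B * ‖z' - z‖ := by
    rw [abs_le]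
    constructor
    · have := hlogE z z'
      rw [norm_sub_rev] at this
      linarith
    · exact hlogE z' z
  -- integrability of the pieces
  have hI3 : IntegrableOn (fun a => ⟪f a, Z' - z'⟫ * (gibbs 𝒜 γ f r z' a - gibbs 𝒜 γ f r z a))
      𝒜 volume := by
    have heq : (fun a => ⟪f a, Z' - z'⟫ * (gibbs 𝒜 γ f r z' a - gibbs 𝒜 γ f r z a))
        = fun a => ⟪f a, Z' - z'⟫ * gibbs 𝒜 γ f r z' a - ⟪f a, Z' - z'⟫ * gibbs 𝒜 γ f r z a := by
      funext a; ring
    rw [heq]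
    exact (int_inner_gibbs h𝒜 hvol0 hvolne hγ hfm hrm hB.le hfB hrR z' (Z' - z')).sub
      (int_inner_gibbs h𝒜 hvol0 hvolne hγ hfm hrm hB.le hfB hrR z (Z' - z'))
  have hI4 := int_inner_gibbs h𝒜 hvol0 hvolne hγ hfm hrm hB.le hfB hrR z ((Z' - Z) - (z' - z))
  -- decomposition of the difference of the two inner-product integrals
  have hIsplit : (∫ a in 𝒜, ⟪f a, Z' - z'⟫ * gibbs 𝒜 γ f r z' a)
        - (∫ a in 𝒜, ⟪f a, Z - z⟫ * gibbs 𝒜 γ f r z a)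
      = (∫ a in 𝒜, ⟪f a, Z' - z'⟫ * (gibbs 𝒜 γ f r z' a - gibbs 𝒜 γ f r z a))
        + ∫ a in 𝒜, ⟪f a, (Z' - Z) - (z' - z)⟫ * gibbs 𝒜 γ f r z a := by
    rw [← integral_sub (int_inner_gibbs h𝒜 hvol0 hvolne hγ hfm hrm hB.le hfB hrR z' (Z' - z'))
      (int_inner_gibbs h𝒜 hvol0 hvolne hγ hfm hrm hB.le hfB hrR z (Z - z)),
      ← integral_add hI3 hI4]
    refine setIntegral_congr_fun h𝒜 (fun a ha => ?_)
    have hinner : ⟪f a, (Z' - Z) - (z' - z)⟫ = ⟪f a, Z' - z'⟫ - ⟪f a, Z - z⟫ := by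
      rw [← inner_sub_right]
      congr 1
      abel
    rw [hinner]
    ring
  -- bound the first piece
  have hA : |∫ a in 𝒜, ⟪f a, Z' - z'⟫ * (gibbs 𝒜 γ f r z' a - gibbs 𝒜 γ f r z a)|
      ≤ B * (‖Z' - Z‖ + ‖z' - z‖ + 2*C) * ∫ a in 𝒜, |gibbs 𝒜 γ f r z' a - gibbs 𝒜 γ f r z a| := by
    have hnorm : ‖Z' - z'‖ ≤ ‖Z' - Z‖ + ‖z' - z‖ + 2*C := by
      have hdec : Z' - z' = (Z' - Z) + (Z - z) + (z - z') := by abel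
      rw [hdec]
      calc ‖(Z' - Z) + (Z - z) + (z - z')‖ ≤ ‖(Z' - Z) + (Z - z)‖ + ‖z - z'‖ := norm_add_le _ _
        _ ≤ ‖Z' - Z‖ + ‖Z - z‖ + ‖z - z'‖ := by gcongr; exact norm_add_le _ _
        _ ≤ ‖Z' - Z‖ + (‖Z‖ + ‖z‖) + ‖z' - z‖ := by
            rw [norm_sub_rev z z']
            gcongr
            exact norm_sub_le _ _
        _ ≤ ‖Z' - Z‖ + ‖z' - z‖ + 2*C := by linarith
    calc |∫ a in 𝒜, ⟪f a, Z' - z'⟫ * (gibbs 𝒜 γ f r z' a - gibbs 𝒜 γ f r z a)|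
        ≤ ∫ a in 𝒜, |⟪f a, Z' - z'⟫ * (gibbs 𝒜 γ f r z' a - gibbs 𝒜 γ f r z a)| :=
          aux_abs_int _ _
      _ ≤ ∫ a in 𝒜, B * (‖Z' - Z‖ + ‖z' - z‖ + 2*C)
            * |gibbs 𝒜 γ f r z' a - gibbs 𝒜 γ f r z a| := by
          refine setIntegral_mono_on hI3.abs (hintabs.const_mul _) h𝒜 (fun a ha => ?_)
          rw [abs_mul]
          refine mul_le_mul_of_nonneg_right ?_ (abs_nonneg _)
          have h1 : |⟪f a, Z' - z'⟫| ≤ B * ‖Z' - z'‖ :=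
            (abs_real_inner_le_norm _ _).trans
              (mul_le_mul_of_nonneg_right (hfB a ha) (norm_nonneg _))
          exact h1.trans (mul_le_mul_of_nonneg_left hnorm hB.le)
      _ = B * (‖Z' - Z‖ + ‖z' - z‖ + 2*C)
            * ∫ a in 𝒜, |gibbs 𝒜 γ f r z' a - gibbs 𝒜 γ f r z a| := integral_const_mul _ _
  -- bound the second piece
  have hBd : |∫ a in 𝒜, ⟪f a, (Z' - Z) - (z' - z)⟫ * gibbs 𝒜 γ f r z a|
      ≤ B * (‖Z' - Z‖ + ‖z' - z‖) := by
    calc |∫ a in 𝒜, ⟪f a, (Z' - Z) - (z' - z)⟫ * gibbs 𝒜 γ f r z a|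
        ≤ ∫ a in 𝒜, |⟪f a, (Z' - Z) - (z' - z)⟫ * gibbs 𝒜 γ f r z a| := aux_abs_int _ _
      _ ≤ ∫ a in 𝒜, B * (‖Z' - Z‖ + ‖z' - z‖) * gibbs 𝒜 γ f r z a := by
          refine setIntegral_mono_on hI4.abs (hintπ.const_mul _) h𝒜 (fun a ha => ?_)
          rw [abs_mul, abs_of_nonneg (gibbs_nonneg h𝒜 hvol0 hvolne hγ hfm hrm hfB hrR z a)]
          refine mul_le_mul_of_nonneg_right ?_
            (gibbs_nonneg h𝒜 hvol0 hvolne hγ hfm hrm hfB hrR z a)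
          have h1 : |⟪f a, (Z' - Z) - (z' - z)⟫| ≤ B * ‖(Z' - Z) - (z' - z)‖ :=
            (abs_real_inner_le_norm _ _).trans
              (mul_le_mul_of_nonneg_right (hfB a ha) (norm_nonneg _))
          exact h1.trans (mul_le_mul_of_nonneg_left (norm_sub_le _ _) hB.le)
      _ = B * (‖Z' - Z‖ + ‖z' - z‖) * 1 := by
          rw [integral_const_mul, int_gibbs_one h𝒜 hvol0 hvolne hγ hfm hrm hfB hrR z]
      _ = B * (‖Z' - Z‖ + ‖z' - z‖) := mul_one _
  -- the key identity
  have hG1 : gibbsG 𝒜 γ f r z' Z' - gibbsG 𝒜 γ f r z Z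
      = (∫ a in 𝒜, ⟪f a, Z' - z'⟫ * (gibbs 𝒜 γ f r z' a - gibbs 𝒜 γ f r z a))
        + (∫ a in 𝒜, ⟪f a, (Z' - Z) - (z' - z)⟫ * gibbs 𝒜 γ f r z a)
        + (γ * Real.log (Epart 𝒜 γ f r z') - γ * Real.log (Epart 𝒜 γ f r z)) := by
    rw [gibbsG_eq h𝒜 hvol0 hvolne hγ hfm hrm hB.le hfB hrR z' Z',
      gibbsG_eq h𝒜 hvol0 hvolne hγ hfm hrm hB.le hfB hrR z Z]
    linear_combination hIsplit
  -- bound T by a multiple of ‖z' - z‖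
  have hX0 : (0:ℝ) ≤ 2*B*γ⁻¹*Real.exp (2*B/γ) := by positivity
  have hTδ : (∫ a in 𝒜, |gibbs 𝒜 γ f r z' a - gibbs 𝒜 γ f r z a|)
      ≤ (2 + 2*B*γ⁻¹*Real.exp (2*B/γ)) * ‖z' - z‖ := by
    rcases le_or_gt ‖z' - z‖ 1 with hd | hd
    · have e2 : Real.exp (B*‖z' - z‖/γ) * Real.exp (B*‖z' - z‖/γ) ≤ Real.exp (2*B/γ) := by
        rw [← Real.exp_add]
        refine Real.exp_le_exp.mpr ?_
        rw [← add_div]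
        refine (div_le_div_iff_of_pos_right hγ).mpr ?_
        nlinarith
      have step1 : 2 * K * Real.exp (B*‖z' - z‖/γ)
          ≤ 2*B*γ⁻¹*Real.exp (2*B/γ) * ‖z' - z‖ := by
        rw [hKdef]
        calc 2 * (B * ‖z' - z‖ / γ * Real.exp (B * ‖z' - z‖ / γ)) * Real.exp (B * ‖z' - z‖ / γ)
            = 2*(B*‖z' - z‖/γ) * (Real.exp (B*‖z' - z‖/γ) * Real.exp (B*‖z' - z‖/γ)) := by
              ring
          _ ≤ 2*(B*‖z' - z‖/γ) * Real.exp (2*B/γ) :=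
              mul_le_mul_of_nonneg_left e2 (by positivity)
          _ = 2*B*γ⁻¹*Real.exp (2*B/γ) * ‖z' - z‖ := by field_simp
      have h3 := hTK.trans step1
      linarith
    · linarith [hT2, mul_nonneg hX0 hδ0, hd]
  -- assemble
  have hfinal : |gibbsG 𝒜 γ f r z' Z' - gibbsG 𝒜 γ f r z Z|
      ≤ B * (‖Z' - Z‖ + ‖z' - z‖ + 2*C)
          * (∫ a in 𝒜, |gibbs 𝒜 γ f r z' a - gibbs 𝒜 γ f r z a|)
        + B * (‖Z' - Z‖ + ‖z' - z‖) + B * ‖z' - z‖ := by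
    rw [hG1]
    refine (abs_add_le _ _).trans ?_
    exact add_le_add ((abs_add_le _ _).trans (add_le_add hA hBd)) hCd
  refine hfinal.trans ?_
  have hexp : Real.exp (2*B/γ) ≤ Real.exp ((4*B + 4*B*C + 4*B^2*C)/γ) :=
    Real.exp_le_exp.mpr ((div_le_div_iff_of_pos_right hγ).mpr (by nlinarith))
  have t1 : B*‖Z' - Z‖*(∫ a in 𝒜, |gibbs 𝒜 γ f r z' a - gibbs 𝒜 γ f r z a|)
      ≤ B*‖Z' - Z‖*2 := mul_le_mul_of_nonneg_left hT2 (by positivity)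
  have t2 : B*‖z' - z‖*(∫ a in 𝒜, |gibbs 𝒜 γ f r z' a - gibbs 𝒜 γ f r z a|)
      ≤ B*‖z' - z‖*2 := mul_le_mul_of_nonneg_left hT2 (by positivity)
  have t3 : (2*B*C)*(∫ a in 𝒜, |gibbs 𝒜 γ f r z' a - gibbs 𝒜 γ f r z a|)
      ≤ (2*B*C)*((2 + 2*B*γ⁻¹*Real.exp (2*B/γ)) * ‖z' - z‖) :=
    mul_le_mul_of_nonneg_left hTδ (by positivity)
  have t5 : 4*B^2*C*(γ⁻¹*Real.exp (2*B/γ))*‖z' - z‖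
      ≤ (4*B + 4*B*C + 4*B^2*C)*(γ⁻¹*Real.exp ((4*B + 4*B*C + 4*B^2*C)/γ))*‖z' - z‖ := by
    refine mul_le_mul_of_nonneg_right ?_ hδ0
    refine mul_le_mul (by nlinarith) (mul_le_mul_of_nonneg_left hexp (by positivity))
      (by positivity) (by positivity)
  have t6 : (0:ℝ) ≤ (4*B + 4*B*C + 4*B^2*C)*Real.exp ((4*B + 4*B*C + 4*B^2*C)/γ)*‖z' - z‖ := by
    positivity
  have t7 : 3*B*‖Z' - Z‖ ≤ (4*B + 4*B*C + 4*B^2*C)*‖Z' - Z‖ :=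
    mul_le_mul_of_nonneg_right
      (by nlinarith [mul_pos hB hC, mul_pos (mul_pos hB hB) hC]) hε0
  have t8 : (4*B + 4*B*C)*‖z' - z‖ ≤ (4*B + 4*B*C + 4*B^2*C)*‖z' - z‖ :=
    mul_le_mul_of_nonneg_right
      (by nlinarith [mul_pos (mul_pos hB hB) hC]) hδ0
  nlinarith [t1, t2, t3, t5, t6, t7, t8]
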